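/- Let a ∈ ℝ and let u : ℝ → ℤ → ℝ be differentiable in t and satisfy u̇ₙ = (uₙ₊₁ − uₙ + a)(uₙ − uₙ₋₁ + a)(uₙ₊₂ − uₙ₊₁ + uₙ₋₁ − uₙ₋₂ + 2a) + b for some constant b ∈ ℝ. Define v t n = u t (n+1) − u t n + a. Then v satisfies v̇ₙ = vₙ(vₙ₊₂vₙ₊₁ − vₙ₋₁vₙ₋₂). -/

import Mathlib

/-- Transformation T1 (v̂ₙ = uₙ₊₁ − uₙ + a) maps equation (E10) to equation (E9). -/
theorem stmt_1 (a b : ℝ) (u v : ℝ → ℤ → ℝ)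
    (hu : ∀ t n, HasDerivAt (fun s => u s n)
      ((u t (n + 1) - u t n + a) * (u t n - u t (n - 1) + a) *
        (u t (n + 2) - u t (n + 1) + u t (n - 1) - u t (n - 2) + 2 * a) + b) t)
    (hv : ∀ t n, v t n = u t (n + 1) - u t n + a) :
    ∀ t n, HasDerivAt (fun s => v s n)
      (v t n * (v t (n + 2) * v t (n + 1) - v t (n - 1) * v t (n - 2))) t := by
  intro t n
  have h1 := hu t (n + 1)
  have h2 := hu t n
  have h : HasDerivAt (fun s => u s (n + 1) - u s n + a) _ t := (h1.sub h2).add_const a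
  have heq : (fun s => u s (n + 1) - u s n + a) = fun s => v s n := by
    funext s; rw [hv]
  rw [heq] at h
  convert h using 1
  simp only [hv, show n + 1 + 1 = n + 2 by ring, show n + 1 - 1 = n by ring,
    show n + 1 + 2 = n + 3 by ring, show n + 1 - 2 = n - 1 by ring,
    show n + 2 + 1 = n + 3 by ring, show n - 1 + 1 = n by ring,
    show n - 2 + 1 = n - 1 by ring]
  ring
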